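/- Let n ≥ 3 and m ≥ 2. The number of multichains S_1 ⊆ S_2 ⊆ ... ⊆ S_{m−1} of length m−1 of elements of P_n (i.e., weakly increasing (m−1)-tuples of elements of P_n under inclusion) equals Σ_{i=0}^{⌊(n−1)/2⌋} p_{n,i−1} · (m−1)^i. (Equivalently, the zeta polynomial of P_n satisfies Z(P_n, m) = (m−1)^{⌊(n−1)/2⌋} · P_n(1/(m−1)).) -/

import Mathlib

open Finset Polynomial

/-- `σ` is a permutation of `[n] = {1, …, n}` (viewed as a function `ℕ → ℕ`
restricted to a bijection of `{1, …, n}` onto itself). -/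
def IsPermOn (n : ℕ) (σ : ℕ → ℕ) : Prop :=
  Set.BijOn σ (Set.Icc 1 n) (Set.Icc 1 n)

/-- The circular peak set of `σ` (as a permutation of `[n]`):
`CP(σ) = {σ(i) : 2 ≤ i ≤ n−1, σ(i−1) < σ(i) > σ(i+1)}`. -/
def CP (n : ℕ) (σ : ℕ → ℕ) : Finset ℕ :=
  ((Finset.Icc 2 (n - 1)).filter (fun i => σ (i - 1) < σ i ∧ σ (i + 1) < σ i)).image σ

open scoped Classical in
/-- `Pn n` is the collection of all subsets `S ⊆ [n]` arising as the circular peak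
set of some permutation of `[n]`. -/
noncomputable def Pn (n : ℕ) : Finset (Finset ℕ) :=
  (Finset.Icc 1 n).powerset.filter (fun S => ∃ σ : ℕ → ℕ, IsPermOn n σ ∧ CP n σ = S)

/-- `pcount n k` is the number of members of `Pn n` of cardinality `k`;
in the paper's notation, `p_{n,i} = pcount n (i+1)`. -/
noncomputable def pcount (n k : ℕ) : ℕ :=
  ((Pn n).filter (fun S => S.card = k)).card

/-- The f-polynomial `P_n(x) = Σ_{i=0}^{⌊(n−1)/2⌋} p_{n,i−1} x^{⌊(n−1)/2⌋−i}`. -/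
noncomputable def fpoly (n : ℕ) : Polynomial ℚ :=
  ∑ i ∈ Finset.range ((n - 1) / 2 + 1),
    Polynomial.C (pcount n i : ℚ) * Polynomial.X ^ ((n - 1) / 2 - i)

/-- The combinatorial characterization condition for circular peak sets. -/
def PCond (n : ℕ) (S : Finset ℕ) : Prop :=
  S ⊆ Finset.Icc 1 n ∧ ∀ s ∈ S, 2 * (S.filter (· ≤ s)).card + 1 ≤ s

lemma sort_getD_lt {T : Finset ℕ} {p q : ℕ} (hpq : p < q) (hq : q < T.card) :
    (T.sort (· ≤ ·)).getD p 0 < (T.sort (· ≤ ·)).getD q 0 := by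
  have hlen : (T.sort (· ≤ ·)).length = T.card := Finset.length_sort _
  have hp : p < (T.sort (· ≤ ·)).length := by omega
  have hq' : q < (T.sort (· ≤ ·)).length := by omega
  rw [List.getD_eq_getElem _ _ hp, List.getD_eq_getElem _ _ hq']
  exact T.sortedLT_sort.strictMono_get (by exact_mod_cast hpq)

lemma sort_getD_mem {T : Finset ℕ} {p : ℕ} (hp : p < T.card) :
    (T.sort (· ≤ ·)).getD p 0 ∈ T := by
  have hlen : (T.sort (· ≤ ·)).length = T.card := Finset.length_sort _
  have hp' : p < (T.sort (· ≤ ·)).length := by omega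
  rw [List.getD_eq_getElem _ _ hp']
  exact (Finset.mem_sort _).mp (List.getElem_mem _)

lemma exists_sort_getD {T : Finset ℕ} {v : ℕ} (hv : v ∈ T) :
    ∃ j < T.card, (T.sort (· ≤ ·)).getD j 0 = v := by
  have hlen : (T.sort (· ≤ ·)).length = T.card := Finset.length_sort _
  have hv' : v ∈ T.sort (· ≤ ·) := (Finset.mem_sort _).mpr hv
  obtain ⟨j, hj, hget⟩ := List.mem_iff_getElem.mp hv'
  exact ⟨j, by omega, by rw [List.getD_eq_getElem _ _ hj]; exact hget⟩

lemma rank_count {T : Finset ℕ} {i : ℕ} (hi : i < T.card) :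
    (T.filter (· ≤ (T.sort (· ≤ ·)).getD i 0)).card = i + 1 := by
  classical
  have hlen : (T.sort (· ≤ ·)).length = T.card := Finset.length_sort _
  have heq : T.filter (· ≤ (T.sort (· ≤ ·)).getD i 0)
      = (Finset.range (i + 1)).image (fun t => (T.sort (· ≤ ·)).getD t 0) := by
    ext y
    simp only [Finset.mem_filter, Finset.mem_image, Finset.mem_range]
    constructor
    · rintro ⟨hy, hle⟩
      have hy' : y ∈ T.sort (· ≤ ·) := (Finset.mem_sort _).mpr hy
      obtain ⟨t, ht, rfl⟩ := List.mem_iff_getElem.mp hy'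
      refine ⟨t, ?_, by rw [List.getD_eq_getElem _ _ ht]⟩
      by_contra hcon
      have hlt : (T.sort (· ≤ ·)).getD i 0 < (T.sort (· ≤ ·)).getD t 0 :=
        sort_getD_lt (T := T) (by omega) (by omega)
      rw [List.getD_eq_getElem _ _ ht] at hlt
      omega
    · rintro ⟨t, ht, rfl⟩
      have htT : t < T.card := by omega
      refine ⟨sort_getD_mem htT, ?_⟩
      rcases Nat.lt_or_ge t i with h | h
      · exact le_of_lt (sort_getD_lt h hi)
      · have : t = i := by omega
        subst this; exact le_rfl
  rw [heq, Finset.card_image_of_injOn, Finset.card_range]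
  intro p hp q hq hpq
  simp only [Finset.coe_range, Set.mem_Iio] at hp hq
  have hpq' : (T.sort (· ≤ ·)).getD p 0 = (T.sort (· ≤ ·)).getD q 0 := hpq
  by_contra hne
  rcases Nat.lt_or_ge p q with h | h
  · have := sort_getD_lt (T := T) h (by omega); omega
  · have := sort_getD_lt (T := T) (show q < p by omega) (by omega); omega

lemma sort_getD_le_of_count {A : Finset ℕ} {x i : ℕ}
    (h : i + 1 ≤ (A.filter (· ≤ x)).card) : (A.sort (· ≤ ·)).getD i 0 ≤ x := by
  classical
  have hlen : (A.sort (· ≤ ·)).length = A.card := Finset.length_sort _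
  set B := A.filter (· ≤ x) with hB
  set I := B.image (fun b => (A.sort (· ≤ ·)).idxOf b) with hI
  have hIcard : I.card = B.card := by
    rw [hI]
    apply Finset.card_image_of_injOn
    intro a ha b hb hab
    have ha' : a ∈ A.sort (· ≤ ·) :=
      (Finset.mem_sort _).mpr (Finset.filter_subset _ _ (by exact_mod_cast ha))
    have hb' : b ∈ A.sort (· ≤ ·) :=
      (Finset.mem_sort _).mpr (Finset.filter_subset _ _ (by exact_mod_cast hb))
    have h1 := List.getElem_idxOf (List.idxOf_lt_length_iff.mpr ha')
    have h2 := List.getElem_idxOf (List.idxOf_lt_length_iff.mpr hb')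
    rw [← h1, ← h2]
    congr 1
  obtain ⟨t, htI, hti⟩ : ∃ t ∈ I, i ≤ t := by
    by_contra hcon
    push_neg at hcon
    have hsub : I ⊆ Finset.range i := fun t ht => Finset.mem_range.mpr (hcon t ht)
    have := Finset.card_le_card hsub
    rw [Finset.card_range, hIcard] at this
    omega
  rw [hI, Finset.mem_image] at htI
  obtain ⟨b, hbB, rfl⟩ := htI
  have hb' : b ∈ A.sort (· ≤ ·) := (Finset.mem_sort _).mpr (Finset.filter_subset _ _ hbB)
  have hblt : (A.sort (· ≤ ·)).idxOf b < (A.sort (· ≤ ·)).length :=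
    List.idxOf_lt_length_iff.mpr hb'
  have hbx : b ≤ x := (Finset.mem_filter.mp hbB).2
  have hgetb : (A.sort (· ≤ ·)).getD ((A.sort (· ≤ ·)).idxOf b) 0 = b := by
    rw [List.getD_eq_getElem _ _ hblt]; exact List.getElem_idxOf hblt
  rcases Nat.eq_or_lt_of_le hti with heq | hlt
  · rw [← heq] at hgetb; omega
  · have := sort_getD_lt (T := A) hlt (by omega)
    omega

lemma cp_subset {n : ℕ} {σ : ℕ → ℕ} (h : IsPermOn n σ) : CP n σ ⊆ Finset.Icc 1 n := by
  intro x hx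
  rw [CP, Finset.mem_image] at hx
  obtain ⟨i, hi, rfl⟩ := hx
  rw [Finset.mem_filter, Finset.mem_Icc] at hi
  have hmem : i ∈ Set.Icc 1 n := Set.mem_Icc.mpr ⟨by omega, by omega⟩
  have := h.mapsTo hmem
  rw [Set.mem_Icc] at this
  exact Finset.mem_Icc.mpr this

lemma cp_cond {n : ℕ} {σ : ℕ → ℕ} (h : IsPermOn n σ) : PCond n (CP n σ) := by
  classical
  refine ⟨cp_subset h, ?_⟩
  intro s hs
  have hsn : s ∈ Finset.Icc 1 n := cp_subset h hs
  rw [Finset.mem_Icc] at hsn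
  set Q := (Finset.Icc 2 (n - 1)).filter
    (fun i => σ (i - 1) < σ i ∧ σ (i + 1) < σ i) with hQ
  have hQIcc : ∀ i ∈ Q, 2 ≤ i ∧ i ≤ n - 1 ∧ σ (i - 1) < σ i ∧ σ (i + 1) < σ i := by
    intro i hi
    rw [hQ, Finset.mem_filter, Finset.mem_Icc] at hi
    exact ⟨hi.1.1, hi.1.2, hi.2⟩
  have hQsub : ∀ i ∈ Q, i ∈ Set.Icc 1 n := by
    intro i hi
    obtain ⟨h1, h2, -⟩ := hQIcc i hi
    exact Set.mem_Icc.mpr ⟨by omega, by omega⟩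
  set Qs := Q.filter (fun i => σ i ≤ s) with hQs
  have hQsQ : Qs ⊆ Q := Finset.filter_subset _ _
  have hQsle : ∀ i ∈ Qs, σ i ≤ s := by
    intro i hi; exact (Finset.mem_filter.mp hi).2
  -- the filtered CP equals image of Qs
  have himg : (CP n σ).filter (· ≤ s) = Qs.image σ := by
    ext x
    simp only [CP, Finset.mem_filter, Finset.mem_image, hQs, ← hQ]
    constructor
    · rintro ⟨⟨i, hi, rfl⟩, hle⟩
      exact ⟨i, ⟨hi, hle⟩, rfl⟩
    · rintro ⟨i, ⟨hi, hle⟩, rfl⟩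
      exact ⟨⟨i, hi, rfl⟩, hle⟩
  have hinj : Set.InjOn σ ↑Qs := fun a ha b hb hab =>
    h.injOn (hQsub a (hQsQ (by exact_mod_cast ha)))
      (hQsub b (hQsQ (by exact_mod_cast hb))) hab
  have hcardQs : ((CP n σ).filter (· ≤ s)).card = Qs.card := by
    rw [himg, Finset.card_image_of_injOn hinj]
  -- Qs is nonempty
  obtain ⟨i₀, hi₀Q, hi₀⟩ : ∃ i ∈ Q, σ i = s := by
    rw [CP, Finset.mem_image] at hs; exact hs
  have hQsne : Qs.Nonempty := ⟨i₀, Finset.mem_filter.mpr ⟨hi₀Q, le_of_eq hi₀⟩⟩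
  -- the set of positions with small values
  set V := (Finset.Icc 1 n).filter (fun i => σ i ≤ s) with hV
  have hVcard : V.card = s := by
    have hinjV : Set.InjOn σ ↑V := by
      intro a ha b hb hab
      rw [Finset.coe_filter] at ha hb
      exact h.injOn (by exact_mod_cast Finset.mem_Icc.mp ha.1) -- fix below
        (by exact_mod_cast Finset.mem_Icc.mp hb.1) hab
    have himgV : V.image σ = Finset.Icc 1 s := by
      ext v
      simp only [hV, Finset.mem_image, Finset.mem_filter, Finset.mem_Icc]
      constructor
      · rintro ⟨i, ⟨hi, hle⟩, rfl⟩
        have := h.mapsTo (Set.mem_Icc.mpr ⟨hi.1, hi.2⟩)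
        rw [Set.mem_Icc] at this
        exact ⟨this.1, hle⟩
      · rintro ⟨h1, h2⟩
        obtain ⟨i, hi, rfl⟩ := h.surjOn (Set.mem_Icc.mpr ⟨h1, by omega⟩)
        rw [Set.mem_Icc] at hi
        exact ⟨i, ⟨⟨hi.1, hi.2⟩, h2⟩, rfl⟩
    calc V.card = (V.image σ).card := (Finset.card_image_of_injOn hinjV).symm
      _ = s := by rw [himgV, Nat.card_Icc]; omega
  -- no two adjacent peaks
  have hnadj : ∀ i ∈ Q, i + 1 ∉ Q := by
    intro i hi hcon
    obtain ⟨-, -, h1, h2⟩ := hQIcc i hi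
    obtain ⟨-, -, h3, -⟩ := hQIcc (i + 1) hcon
    simp only [Nat.add_sub_cancel] at h3
    omega
  set m₀ := Qs.min' hQsne with hm₀
  have hm₀Qs : m₀ ∈ Qs := Qs.min'_mem hQsne
  have hm₀2 : 2 ≤ m₀ := (hQIcc m₀ (hQsQ hm₀Qs)).1
  set W := (Qs ∪ Qs.image (· + 1)) ∪ {m₀ - 1} with hW
  have hd1 : Disjoint Qs (Qs.image (· + 1)) := by
    rw [Finset.disjoint_right]
    intro i hi hiQs
    rw [Finset.mem_image] at hi
    obtain ⟨j, hj, rfl⟩ := hi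
    exact hnadj j (hQsQ hj) (hQsQ hiQs)
  have hd2 : Disjoint (Qs ∪ Qs.image (· + 1)) {m₀ - 1} := by
    rw [Finset.disjoint_right]
    intro i hi hiu
    rw [Finset.mem_singleton] at hi
    subst hi
    rw [Finset.mem_union, Finset.mem_image] at hiu
    rcases hiu with h1 | ⟨j, hj, hje⟩
    · have := Qs.min'_le _ h1
      omega
    · have := Qs.min'_le _ hj
      omega
  have hWcard : W.card = 2 * Qs.card + 1 := by
    rw [hW, Finset.card_union_of_disjoint hd2, Finset.card_union_of_disjoint hd1,
      Finset.card_image_of_injective _ (add_left_injective 1), Finset.card_singleton]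
    ring
  have hWV : W ⊆ V := by
    intro i hi
    rw [hW, Finset.mem_union, Finset.mem_union, Finset.mem_image,
      Finset.mem_singleton] at hi
    rw [hV, Finset.mem_filter, Finset.mem_Icc]
    rcases hi with (hi | ⟨j, hj, rfl⟩) | hi
    · obtain ⟨h1, h2, -⟩ := hQIcc i (hQsQ hi)
      exact ⟨⟨by omega, by omega⟩, hQsle i hi⟩
    · obtain ⟨h1, h2, -, h4⟩ := hQIcc j (hQsQ hj)
      exact ⟨⟨by omega, by omega⟩, le_trans (le_of_lt h4) (hQsle j hj)⟩
    · subst hi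
      obtain ⟨h1, h2, h3, -⟩ := hQIcc m₀ (hQsQ hm₀Qs)
      exact ⟨⟨by omega, by omega⟩, le_trans (le_of_lt h3) (hQsle m₀ hm₀Qs)⟩
  have := Finset.card_le_card hWV
  rw [hWcard, hVcard] at this
  omega


lemma exists_perm_of_cond {n : ℕ} (hn : 1 ≤ n) {S : Finset ℕ} (h : PCond n S) :
    ∃ σ : ℕ → ℕ, IsPermOn n σ ∧ CP n σ = S := by
  classical
  obtain ⟨hsub, hcond⟩ := h
  set k := S.card with hk
  set A := Finset.Icc 1 n \ S with hA
  have hAmem : ∀ x, x ∈ A ↔ (1 ≤ x ∧ x ≤ n) ∧ x ∉ S := by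
    intro x; rw [hA, Finset.mem_sdiff, Finset.mem_Icc]
  have hIccCard : (Finset.Icc 1 n).card = n := by rw [Nat.card_Icc]; omega
  have hAcard : A.card = n - k := by
    rw [hA, Finset.card_sdiff_of_subset hsub, hIccCard, hk]
  set a : ℕ → ℕ := fun p => (A.sort (· ≤ ·)).getD p 0 with haf
  set s : ℕ → ℕ := fun p => (S.sort (· ≤ ·)).getD p 0 with hsf
  have ha_lt : ∀ p q, p < q → q < n - k → a p < a q := by
    intro p q h1 h2
    rw [haf]
    exact sort_getD_lt h1 (by omega)
  have hs_lt : ∀ p q, p < q → q < k → s p < s q := by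
    intro p q h1 h2
    rw [hsf]
    exact sort_getD_lt h1 (by omega)
  have ha_mem : ∀ p, p < n - k → a p ∈ A := by
    intro p hp
    rw [haf]
    exact sort_getD_mem (by omega)
  have hs_mem : ∀ p, p < k → s p ∈ S := by
    intro p hp
    rw [hsf]
    exact sort_getD_mem (by omega)
  have hs_cond : ∀ j, j < k → 2 * (j + 1) + 1 ≤ s j := by
    intro j hj
    have h1 := hcond (s j) (hs_mem j hj)
    have h2 : (S.filter (· ≤ s j)).card = j + 1 := by
      rw [hsf]; exact rank_count (by omega)
    omega
  have hs_le_n : ∀ j, j < k → s j ≤ n := by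
    intro j hj
    have := hsub (hs_mem j hj)
    rw [Finset.mem_Icc] at this
    omega
  have hn2k : 2 * k + 1 ≤ n := by
    rcases Nat.eq_zero_or_pos k with h0 | h0
    · omega
    · have h1 := hs_cond (k - 1) (by omega)
      have h2 := hs_le_n (k - 1) (by omega)
      omega
  have key : ∀ j, j < k → a (j + 1) < s j := by
    intro j hj
    have hx1 : 1 ≤ s j := by have := hs_cond j hj; omega
    have hx2 : s j ≤ n := hs_le_n j hj
    have hIccf : (Finset.Icc 1 n).filter (· ≤ s j) = Finset.Icc 1 (s j) := by
      ext y
      simp only [Finset.mem_filter, Finset.mem_Icc]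
      omega
    have hsplit : A.filter (· ≤ s j)
        = ((Finset.Icc 1 n).filter (· ≤ s j)) \ (S.filter (· ≤ s j)) := by
      ext y
      simp only [hAmem y, Finset.mem_filter, Finset.mem_sdiff, Finset.mem_Icc]
      tauto
    have hScount : (S.filter (· ≤ s j)).card = j + 1 := by
      rw [hsf]; exact rank_count (by omega)
    have hAcount : (A.filter (· ≤ s j)).card = s j - (j + 1) := by
      rw [hsplit, Finset.card_sdiff_of_subset (Finset.filter_subset_filter _ hsub), hIccf,
        hScount, Nat.card_Icc]
      omega
    have hcount : (j + 1) + 1 ≤ (A.filter (· ≤ s j)).card := by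
      have := hs_cond j hj
      omega
    have hle : a (j + 1) ≤ s j := by
      rw [haf]; exact sort_getD_le_of_count hcount
    have hne : a (j + 1) ≠ s j := by
      intro hcon
      have h1 := ha_mem (j + 1) (by omega)
      rw [hAmem] at h1
      exact h1.2 (hcon ▸ hs_mem j hj)
    omega
  set r := n - (2 * k + 1) with hr
  have hnr : n = r + 2 * k + 1 := by omega
  set σ : ℕ → ℕ := fun i =>
    if i ≤ r then a (n - k - i)
    else if (i - r) % 2 = 1 then a ((i - r - 1) / 2)
    else s ((i - r) / 2 - 1) with hσ
  have hv1 : ∀ i, i ≤ r → σ i = a (n - k - i) := by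
    intro i h2
    rw [hσ]
    simp only [if_pos h2]
  have hv2 : ∀ j, σ (r + 2 * j + 1) = a j := by
    intro j
    rw [hσ]
    simp only []
    rw [if_neg (by omega : ¬(r + 2 * j + 1 ≤ r))]
    have e : r + 2 * j + 1 - r = 2 * j + 1 := by omega
    rw [e, if_pos (by omega : (2 * j + 1) % 2 = 1)]
    congr 1
    omega
  have hv3 : ∀ j, σ (r + 2 * j + 2) = s j := by
    intro j
    rw [hσ]
    simp only []
    rw [if_neg (by omega : ¬(r + 2 * j + 2 ≤ r))]
    have e : r + 2 * j + 2 - r = 2 * j + 2 := by omega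
    rw [e, if_neg (by omega : ¬((2 * j + 2) % 2 = 1))]
    congr 1
    omega
  have hAIcc : ∀ x ∈ A, 1 ≤ x ∧ x ≤ n := by
    intro x hx; exact ((hAmem x).mp hx).1
  have hSIcc : ∀ x ∈ S, 1 ≤ x ∧ x ≤ n := by
    intro x hx
    have := hsub hx; rw [Finset.mem_Icc] at this; exact this
  -- classification of positions
  have hclass : ∀ i, 1 ≤ i → i ≤ n →
      (1 ≤ i ∧ i ≤ r) ∨ (∃ j, j ≤ k ∧ i = r + 2 * j + 1) ∨
        (∃ j, j < k ∧ i = r + 2 * j + 2) := by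
    intro i h1 h2
    rcases Nat.lt_or_ge r i with hgt | hle
    · by_cases hpar : (i - r) % 2 = 1
      · exact Or.inr (Or.inl ⟨(i - r - 1) / 2, by omega, by omega⟩)
      · exact Or.inr (Or.inr ⟨(i - r) / 2 - 1, by omega, by omega⟩)
    · exact Or.inl ⟨h1, hle⟩
  have hmaps : Set.MapsTo σ (Set.Icc 1 n) (Set.Icc 1 n) := by
    intro i hi
    rw [Set.mem_Icc] at hi
    rw [Set.mem_Icc]
    rcases hclass i hi.1 hi.2 with ⟨h1, h2⟩ | ⟨j, hj, rfl⟩ | ⟨j, hj, rfl⟩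
    · rw [hv1 i h2]
      exact hAIcc _ (ha_mem _ (by omega))
    · rw [hv2 j]
      exact hAIcc _ (ha_mem _ (by omega))
    · rw [hv3 j]
      exact hSIcc _ (hs_mem _ (by omega))
  have hsurj : Set.SurjOn σ (Set.Icc 1 n) (Set.Icc 1 n) := by
    intro v hv
    rw [Set.mem_Icc] at hv
    by_cases hvS : v ∈ S
    · obtain ⟨j, hj, hget⟩ := exists_sort_getD hvS
      rw [← hk] at hj
      refine ⟨r + 2 * j + 2, Set.mem_Icc.mpr ⟨by omega, by omega⟩, ?_⟩
      rw [hv3 j, hsf]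
      exact hget
    · have hvA : v ∈ A := (hAmem v).mpr ⟨⟨hv.1, hv.2⟩, hvS⟩
      obtain ⟨j, hj, hget⟩ := exists_sort_getD hvA
      rw [hAcard] at hj
      rcases Nat.lt_or_ge k j with hjk | hjk
      · refine ⟨n - k - j, Set.mem_Icc.mpr ⟨by omega, by omega⟩, ?_⟩
        rw [hv1 _ (by omega)]
        have e : n - k - (n - k - j) = j := by omega
        rw [e, haf]
        exact hget
      · refine ⟨r + 2 * j + 1, Set.mem_Icc.mpr ⟨by omega, by omega⟩, ?_⟩
        rw [hv2 j, haf]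
        exact hget
  have hperm : IsPermOn n σ := by
    rw [IsPermOn]
    exact ((Set.finite_Icc 1 n).surjOn_iff_bijOn_of_mapsTo hmaps).mp hsurj
  refine ⟨σ, hperm, ?_⟩
  -- CP n σ = S
  ext v
  rw [CP, Finset.mem_image]
  constructor
  · rintro ⟨i, hi, rfl⟩
    rw [Finset.mem_filter, Finset.mem_Icc] at hi
    obtain ⟨⟨h2i, hin1⟩, hpk1, hpk2⟩ := hi
    rcases hclass i (by omega) (by omega) with ⟨h1, h2⟩ | ⟨j, hj, rfl⟩ | ⟨j, hj, rfl⟩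
    · exfalso
      rw [hv1 i h2, hv1 (i - 1) (by omega)] at hpk1
      have e : n - k - (i - 1) = (n - k - i) + 1 := by omega
      rw [e] at hpk1
      have := ha_lt (n - k - i) (n - k - i + 1) (by omega) (by omega)
      omega
    · exfalso
      rcases Nat.eq_zero_or_pos j with rfl | hj0
      · -- i = r + 1, left neighbor is a (k+1)
        have hr1 : 1 ≤ r := by omega
        have e : r + 2 * 0 + 1 - 1 = r := by omega
        rw [hv2 0, e, hv1 r (le_refl r)] at hpk1
        have e2 : n - k - r = k + 1 := by omega
        rw [e2] at hpk1
        have := ha_lt 0 (k + 1) (by omega) (by omega)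
        omega
      · have e : r + 2 * j + 1 - 1 = r + 2 * (j - 1) + 2 := by omega
        rw [hv2 j, e, hv3 (j - 1)] at hpk1
        have hkey := key (j - 1) (by omega)
        have e2 : j - 1 + 1 = j := by omega
        rw [e2] at hkey
        omega
    · rw [hv3 j]
      exact hs_mem j hj
  · intro hvS
    obtain ⟨j, hj, hget⟩ := exists_sort_getD hvS
    rw [← hk] at hj
    have hsv : s j = v := by rw [hsf]; exact hget
    refine ⟨r + 2 * j + 2, ?_, ?_⟩
    · rw [Finset.mem_filter, Finset.mem_Icc]
      refine ⟨⟨by omega, by omega⟩, ?_, ?_⟩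
      · have e : r + 2 * j + 2 - 1 = r + 2 * j + 1 := by omega
        rw [e, hv2 j, hv3 j]
        have h1 := ha_lt j (j + 1) (by omega) (by omega)
        have h2 := key j hj
        omega
      · have e : r + 2 * j + 2 + 1 = r + 2 * (j + 1) + 1 := by omega
        rw [e, hv2 (j + 1), hv3 j]
        exact key j hj
    · rw [hv3 j]
      exact hsv

lemma mem_Pn_iff {n : ℕ} (hn : 1 ≤ n) {S : Finset ℕ} : S ∈ Pn n ↔ PCond n S := by
  classical
  constructor
  · intro hS
    rw [Pn, Finset.mem_filter] at hS
    obtain ⟨-, σ, hσ, rfl⟩ := hS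
    exact cp_cond hσ
  · intro hS
    obtain ⟨σ, hσ, hcp⟩ := exists_perm_of_cond hn hS
    rw [Pn, Finset.mem_filter, Finset.mem_powerset]
    exact ⟨hS.1, σ, hσ, hcp⟩

lemma Pn_down {n : ℕ} (hn : 1 ≤ n) {S T : Finset ℕ} (hS : S ∈ Pn n) (hT : T ⊆ S) :
    T ∈ Pn n := by
  rw [mem_Pn_iff hn] at hS ⊢
  refine ⟨hT.trans hS.1, fun s hs => ?_⟩
  calc 2 * (T.filter (· ≤ s)).card + 1 ≤ 2 * (S.filter (· ≤ s)).card + 1 := by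
        have := Finset.card_le_card (Finset.filter_subset_filter (· ≤ s) hT)
        omega
    _ ≤ s := hS.2 s (hT hs)

lemma Pn_card_le {n : ℕ} (hn : 1 ≤ n) {S : Finset ℕ} (hS : S ∈ Pn n) :
    S.card ≤ (n - 1) / 2 := by
  rw [mem_Pn_iff hn] at hS
  rcases S.eq_empty_or_nonempty with rfl | hne
  · simp
  · have hmax := S.max'_mem hne
    have h1 := hS.2 _ hmax
    have h2 : S.filter (· ≤ S.max' hne) = S := by
      apply Finset.filter_true_of_mem
      intro x hx; exact S.le_max' x hx
    have h3 : S.max' hne ≤ n := (Finset.mem_Icc.mp (hS.1 hmax)).2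
    rw [h2] at h1
    omega

/-- Corollary 3.5: for `m ≥ 2`, the number of multichains
`S_1 ⊆ S_2 ⊆ … ⊆ S_{m−1}` in `P_n` equals `Σ_{i=0}^{⌊(n−1)/2⌋} p_{n,i−1}·(m−1)^i`,
i.e. `Z(P_n, m) = (m−1)^{⌊(n−1)/2⌋}·P_n(1/(m−1))`. -/
theorem Pn_zeta_polynomial (n m : ℕ) (hn : 3 ≤ n) (hm : 2 ≤ m) :
    Set.ncard {f : Fin (m - 1) → Finset ℕ |
        (∀ j, f j ∈ Pn n) ∧ ∀ j k : Fin (m - 1), j ≤ k → f j ⊆ f k} =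
      ∑ i ∈ Finset.range ((n - 1) / 2 + 1), pcount n i * (m - 1) ^ i := by
  classical
  have hn1 : 1 ≤ n := by omega
  have hm1 : m - 2 < m - 1 := by omega
  set M := {f : Fin (m - 1) → Finset ℕ |
      (∀ j, f j ∈ Pn n) ∧ ∀ j k : Fin (m - 1), j ≤ k → f j ⊆ f k} with hM
  set jmax : Fin (m - 1) := ⟨m - 2, hm1⟩ with hjmax
  have hle_jmax : ∀ j : Fin (m - 1), j ≤ jmax := by
    intro j
    have := j.isLt
    simp only [Fin.le_def, hjmax]
    omega
  -- the chain associated to a pair (S, coloring)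
  set F : (Σ S : {S // S ∈ Pn n}, ({x // x ∈ S.1} → Fin (m - 1))) →
      (Fin (m - 1) → Finset ℕ) := fun p j =>
    p.1.1.filter (fun x => ∀ h : x ∈ p.1.1, (p.2 ⟨x, h⟩ : ℕ) ≤ (j : ℕ)) with hF
  have hFmem : ∀ p, F p ∈ M := by
    intro p
    constructor
    · intro j
      exact Pn_down hn1 p.1.2 (Finset.filter_subset _ _)
    · intro j k hjk x hx
      simp only [hF, Finset.mem_filter] at hx ⊢
      exact ⟨hx.1, fun h => le_trans (hx.2 h) hjk⟩
  have hFtop : ∀ p, F p jmax = p.1.1 := by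
    intro p
    apply Finset.filter_true_of_mem
    intro x hx h
    have := (p.2 ⟨x, h⟩).isLt
    simp only [hjmax]
    omega
  have hFmemiff : ∀ p x (h : x ∈ p.1.1) (j : Fin (m - 1)),
      x ∈ F p j ↔ (p.2 ⟨x, h⟩ : ℕ) ≤ (j : ℕ) := by
    intro p x h j
    simp only [hF, Finset.mem_filter]
    constructor
    · intro hx; exact hx.2 h
    · intro hx; exact ⟨h, fun h' => by convert hx using 3⟩
  let Φ : (Σ S : {S // S ∈ Pn n}, ({x // x ∈ S.1} → Fin (m - 1))) → M :=
    fun p => ⟨F p, hFmem p⟩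
  have hΦinj : Function.Injective Φ := by
    rintro ⟨⟨S, hS⟩, c⟩ ⟨⟨S', hS'⟩, c'⟩ hfeq
    have heq : ∀ j, F ⟨⟨S, hS⟩, c⟩ j = F ⟨⟨S', hS'⟩, c'⟩ j := by
      intro j
      exact congrFun (congrArg Subtype.val hfeq) j
    have hSS : S = S' := by
      have h1 := hFtop ⟨⟨S, hS⟩, c⟩
      have h2 := hFtop ⟨⟨S', hS'⟩, c'⟩
      exact h1.symm.trans ((heq jmax).trans h2)
    subst hSS
    have hcc : c = c' := by
      funext x
      obtain ⟨x, hx⟩ := x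
      apply Fin.le_antisymm
      · have h1 := (hFmemiff ⟨⟨S, hS⟩, c⟩ x hx (c' ⟨x, hx⟩)).mpr
        have h2 := (hFmemiff ⟨⟨S, hS⟩, c'⟩ x hx (c' ⟨x, hx⟩)).mpr le_rfl
        rw [← heq _] at h2
        exact (hFmemiff ⟨⟨S, hS⟩, c⟩ x hx (c' ⟨x, hx⟩)).mp h2
      · have h2 := (hFmemiff ⟨⟨S, hS⟩, c⟩ x hx (c ⟨x, hx⟩)).mpr le_rfl
        rw [heq _] at h2
        exact (hFmemiff ⟨⟨S, hS⟩, c'⟩ x hx (c ⟨x, hx⟩)).mp h2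
    rw [hcc]
  have hΦsurj : Function.Surjective Φ := by
    rintro ⟨f, hf1, hf2⟩
    set S := f jmax with hStop
    have hS : S ∈ Pn n := hf1 jmax
    have hex : ∀ x ∈ S, ∃ j : ℕ, ∃ hj : j < m - 1, x ∈ f ⟨j, hj⟩ :=
      fun x hx => ⟨m - 2, hm1, hx⟩
    set cn : ℕ → ℕ := fun x => sInf {j : ℕ | ∃ hj : j < m - 1, x ∈ f ⟨j, hj⟩} with hcn
    have hcn_mem : ∀ x ∈ S, ∃ hj : cn x < m - 1, x ∈ f ⟨cn x, hj⟩ := by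
      intro x hx
      exact Nat.sInf_mem (⟨m - 2, hm1, hx⟩ :
        {j : ℕ | ∃ hj : j < m - 1, x ∈ f ⟨j, hj⟩}.Nonempty)
    have hcn_lt : ∀ x ∈ S, cn x < m - 1 := fun x hx => (hcn_mem x hx).1
    refine ⟨⟨⟨S, hS⟩, fun x => ⟨cn x.1, hcn_lt x.1 x.2⟩⟩, ?_⟩
    apply Subtype.ext
    funext j
    ext x
    simp only [Φ, hF, Finset.mem_filter]
    constructor
    · rintro ⟨hxS, hc⟩
      have := hc hxS
      obtain ⟨hj, hmem⟩ := hcn_mem x hxS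
      have hsub := hf2 ⟨cn x, hj⟩ j (by simpa [Fin.le_def] using this)
      exact hsub hmem
    · intro hxf
      have hxS : x ∈ S := hf2 j jmax (hle_jmax j) hxf
      refine ⟨hxS, fun h => ?_⟩
      exact Nat.sInf_le ⟨j.isLt, by simpa using hxf⟩
  -- counting
  have hcard : Set.ncard M = ∑ S ∈ Pn n, (m - 1) ^ S.card := by
    rw [← Nat.card_coe_set_eq]
    rw [← Nat.card_congr (Equiv.ofBijective Φ ⟨hΦinj, hΦsurj⟩)]
    rw [Nat.card_eq_fintype_card, Fintype.card_sigma]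
    have : ∀ S : {S // S ∈ Pn n},
        Fintype.card ({x // x ∈ S.1} → Fin (m - 1)) = (m - 1) ^ S.1.card := by
      intro S
      rw [Fintype.card_fun, Fintype.card_fin, Fintype.card_coe]
    rw [Finset.sum_congr rfl (fun S _ => this S)]
    rw [Finset.univ_eq_attach, Finset.sum_attach (Pn n) (fun S => (m - 1) ^ S.card)]
  rw [hcard]
  rw [← Finset.sum_fiberwise_of_maps_to (g := fun S : Finset ℕ => S.card)
      (t := Finset.range ((n - 1) / 2 + 1))
      (fun S hS => Finset.mem_range.mpr (Nat.lt_succ_of_le (Pn_card_le hn1 hS)))]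
  apply Finset.sum_congr rfl
  intro i hi
  rw [pcount, Finset.sum_congr rfl (fun S hS => by
    rw [(Finset.mem_filter.mp hS).2]), Finset.sum_const, smul_eq_mul, mul_comm]
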